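/- Let F be a field, k ≥ 1 an integer and β ∈ F, and suppose the polynomial X^k − β splits in F[X] as X^k − β = ∏_{j=1}^k (X − η_j) with η_1,…,η_k ∈ F. Then for every r ≥ 1 and every matrix A ∈ M_r(F) one has ∏_{j=1}^k det(1 − η_j·A) = det(1 − β·A^k), where 1 denotes the r×r identity matrix. -/

import Mathlib

open Polynomial

lemma reflect_prod_deg_le_one {F : Type*} [CommRing F] {ι : Type*} (s : Finset ι)
    (p : ι → F[X]) (hp : ∀ j ∈ s, (p j).natDegree ≤ 1) :
    reflect s.card (∏ j ∈ s, p j) = ∏ j ∈ s, reflect 1 (p j) := by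
  induction s using Finset.cons_induction with
  | empty => simp [reflect_one]
  | cons a s ha ih =>
    rw [Finset.prod_cons, Finset.prod_cons, Finset.card_cons, add_comm s.card 1,
      reflect_mul (p a) _ (hp a (Finset.mem_cons_self a s))
        (natDegree_prod_le _ _ |>.trans ?_), ih fun j hj => hp j (Finset.mem_cons_of_mem hj)]
    calc ∑ j ∈ s, (p j).natDegree ≤ ∑ _j ∈ s, 1 :=
          Finset.sum_le_sum fun j hj => hp j (Finset.mem_cons_of_mem hj)
      _ = s.card := by simp

/-- If `X^k − β` splits over a field `F` as `∏ (X − η_j)`, then for every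
matrix `A ∈ M_r(F)` one has `∏_j det(1 − η_j • A) = det(1 − β • A^k)`. -/
theorem prod_det_one_sub_root_smul {F : Type*} [Field F] {k : ℕ} (hk : 1 ≤ k)
    (β : F) (η : Fin k → F)
    (hsplit : (X : F[X]) ^ k - C β = ∏ j : Fin k, ((X : F[X]) - C (η j)))
    {r : ℕ} (hr : 1 ≤ r) (A : Matrix (Fin r) (Fin r) F) :
    ∏ j : Fin k, ((1 : Matrix (Fin r) (Fin r) F) - η j • A).det
      = ((1 : Matrix (Fin r) (Fin r) F) - β • A ^ k).det := by
  -- apply reflect k to hsplit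
  have key : (1 : F[X]) - C β * X ^ k = ∏ j : Fin k, (1 - C (η j) * X) := by
    have h := congrArg (reflect k) hsplit
    rw [reflect_sub, reflect_monomial, reflect_C] at h
    have hcard : (Finset.univ : Finset (Fin k)).card = k := by simp
    have h2 : reflect k (∏ j : Fin k, ((X:F[X]) - C (η j)))
        = ∏ j : Fin k, reflect 1 ((X:F[X]) - C (η j)) := by
      convert reflect_prod_deg_le_one Finset.univ (fun j => (X:F[X]) - C (η j))
        (fun j _ => natDegree_X_sub_C_le (η j)) using 2
      · rfl
      · simp
    rw [h2] at h
    simp only [revAt_le (le_refl k), Nat.sub_self, pow_zero] at h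
    convert h using 2 with j
    rw [reflect_sub, reflect_C]
    simp
  have hsm : ∀ c : F, (algebraMap F (Matrix (Fin r) (Fin r) F)) c * A = c • A := by
    intro c
    rw [Algebra.algebraMap_eq_smul_one, smul_mul_assoc, one_mul]
  have hsm2 : (algebraMap F (Matrix (Fin r) (Fin r) F)) β * A ^ k = β • A ^ k := by
    rw [Algebra.algebraMap_eq_smul_one, smul_mul_assoc, one_mul]
  set f : F[X] →* F :=
    Matrix.detMonoidHom.comp (aeval A : F[X] →ₐ[F] Matrix (Fin r) (Fin r) F).toRingHom.toMonoidHom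
    with hf
  have happ := congrArg f key
  rw [map_prod] at happ
  have hfval : ∀ p : F[X], f p = ((aeval A) p).det := fun p => rfl
  simp only [hfval] at happ
  simp only [map_sub, map_mul, map_one, map_pow, aeval_X, aeval_C, hsm, hsm2] at happ
  rw [← happ]
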